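/- Let n ≥ 3 and let S ⊆ [n] be a set of vertices of the cycle C_n with |S| ≥ 2 and no two elements cyclically adjacent, and suppose the complement of S contains at least two singleton intervals {r} and {s}. Then the permutation σ of [n] defined by σ(r) = n, σ(s) = 1, with σ strictly increasing along the cyclic path from s to r in the increasing direction and strictly increasing along the cyclic path from s to r in the decreasing direction, satisfies all five S-consistency conditions (i)–(v) of Definition: monotonicity constraints relating σ-values at interval endpoints b_j, a_{j+1} and their interval neighbors, and strict monotonicity of σ on every interval of size ≥ 3. -/

import Mathlib

open MvPolynomial

variable {n : ℕ}

/-- Number of connected components of the subgraph of `G` induced on `T`. -/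
noncomputable def numComp (G : SimpleGraph (Fin n)) (T : Set (Fin n)) : ℕ :=
  Nat.card (G.induce T).ConnectedComponent

/-- `a` and `b` lie in the same connected component of the subgraph induced on `T`. -/
def SameComp (G : SimpleGraph (Fin n)) (T : Set (Fin n)) (a b : Fin n) : Prop :=
  ∃ (ha : a ∈ T) (hb : b ∈ T), (G.induce T).Reachable ⟨a, ha⟩ ⟨b, hb⟩

/-- `S` is a minimal `k`-cut of `G`. -/
def IsMinKCut (G : SimpleGraph (Fin n)) (S : Set (Fin n)) (k : ℕ) : Prop :=
  S.Nonempty ∧ S ≠ Set.univ ∧ numComp G Sᶜ = k ∧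
    ∀ i ∈ S, numComp G (Sᶜ ∪ {i}) < numComp G Sᶜ

/-- The collection `min(G)`: all minimal `k`-cuts (`k ≥ 2`) together with `∅`. -/
def minSet (G : SimpleGraph (Fin n)) : Set (Set (Fin n)) :=
  {S | S = ∅ ∨ ∃ k, 2 ≤ k ∧ IsMinKCut G S k}

/-- `A` is a connected dominating set of the subgraph of `G` induced on `T`. -/
def ConnDom (G : SimpleGraph (Fin n)) (T A : Set (Fin n)) : Prop :=
  A ⊆ T ∧ (G.induce A).Connected ∧ ∀ v ∈ T, v ∉ A → ∃ a ∈ A, G.Adj v a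

/-- The polynomial ring `K[x_1,…,x_n,y_1,…,y_n]` over `ℂ`. -/
abbrev PolyRing (n : ℕ) := MvPolynomial (Fin n ⊕ Fin n) ℂ

/-- The binomial `f_{i,j} = x_i y_j − x_j y_i`. -/
noncomputable def fij (i j : Fin n) : PolyRing n :=
  X (Sum.inl i) * X (Sum.inr j) - X (Sum.inl j) * X (Sum.inr i)

/-- The binomial edge ideal of a graph. -/
noncomputable def beIdeal (G : SimpleGraph (Fin n)) : Ideal (PolyRing n) :=
  Ideal.span {g | ∃ i j, G.Adj i j ∧ g = fij i j}

/-- Localized v-number of `I` at `p`. -/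
noncomputable def vAt (I p : Ideal (PolyRing n)) : ℕ :=
  sInf {d | ∃ f : PolyRing n, f.IsHomogeneous d ∧ Submodule.colon I (Ideal.span {f}) = p}

/-- v-number of `I`. -/
noncomputable def vNum (I : Ideal (PolyRing n)) : ℕ :=
  sInf {d | ∃ f : PolyRing n, f.IsHomogeneous d ∧ (Submodule.colon I (Ideal.span {f})).IsPrime}

/-- The graph which is the disjoint union of complete graphs on the connected
components of the subgraph of `G` induced on `Sᶜ`. -/
def tildeG (G : SimpleGraph (Fin n)) (S : Set (Fin n)) : SimpleGraph (Fin n) :=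
  SimpleGraph.fromRel (fun a b => SameComp G Sᶜ a b)

/-- The minimal prime `P_S` of the binomial edge ideal. -/
noncomputable def primePS (G : SimpleGraph (Fin n)) (S : Set (Fin n)) : Ideal (PolyRing n) :=
  Ideal.span (({g | ∃ i ∈ S, g = X (Sum.inl i)} ∪ {g | ∃ i ∈ S, g = X (Sum.inr i)} : Set (PolyRing n)))
    ⊔ beIdeal (tildeG G S)

/-- `B` is a dependent set of the rank-≤2 matroid `M(S)`. -/
def depM (G : SimpleGraph (Fin n)) (S : Set (Fin n)) (B : Set (Fin n)) : Prop :=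
  (B ∩ S).Nonempty ∨ (∃ a b, a ∈ B ∧ b ∈ B ∧ a ≠ b ∧ SameComp G Sᶜ a b) ∨ 3 ≤ B.ncard

/-- `A` is a transversal of `{D(M(S'))\D(M(S)) : S' ∈ min(G)\{S}}` consisting of
singletons and pairs outside `D(M(S))`. -/
def IsTransversal (G : SimpleGraph (Fin n)) (S : Set (Fin n))
    (A : Finset (Finset (Fin n))) : Prop :=
  (∀ e ∈ A, e.card = 1 ∨ e.card = 2) ∧ (∀ e ∈ A, ¬ depM G S ↑e) ∧
    ∀ S' ∈ minSet G, S' ≠ S → ∃ e ∈ A, depM G S' ↑e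

/-- The singletons of `A`, viewed as a subset of `[n]`. -/
def A1set (A : Finset (Finset (Fin n))) : Finset (Fin n) :=
  (A.filter fun e => e.card = 1).biUnion id

/-- The pairs of `A`. -/
def A2set (A : Finset (Finset (Fin n))) : Finset (Finset (Fin n)) :=
  A.filter fun e => e.card = 2

/-- The binomial attached to an unordered pair. -/
noncomputable def fPair (e : Finset (Fin n)) : PolyRing n :=
  if h : e.Nonempty then fij (e.min' h) (e.max' h) else 1

/-- The generator `g_{A,C,D}`. -/
noncomputable def gPoly (A : Finset (Finset (Fin n))) (C D : Finset (Fin n)) : PolyRing n :=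
  (∏ k ∈ C, X (Sum.inl k)) * (∏ k ∈ D, X (Sum.inr k)) * ∏ e ∈ A2set A, fPair e

/-- The cycle graph on `[n]`. -/
def cycG (n : ℕ) [NeZero n] : SimpleGraph (Fin n) :=
  SimpleGraph.fromRel (fun i j => j = i + 1)

/-- The connected domination number of `G`. -/
noncomputable def gammaC (G : SimpleGraph (Fin n)) : ℕ :=
  sInf {k | ∃ A : Set (Fin n), ConnDom G Set.univ A ∧ A.ncard = k}

/-- `S'` is nice with respect to the components `V1`, `V2`. -/
def Nice (G : SimpleGraph (Fin n)) (V1 V2 S' : Set (Fin n)) : Prop :=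
  ¬ ∃ i j, i ∈ V1 \ S' ∧ j ∈ V2 \ S' ∧ SameComp G S'ᶜ i j

/-- `V1`, `V2` are the vertex sets of the two connected components of the
subgraph induced on `Sᶜ`. -/
def ComponentsOf (G : SimpleGraph (Fin n)) (S V1 V2 : Set (Fin n)) : Prop :=
  V1 ∪ V2 = Sᶜ ∧ Disjoint V1 V2 ∧ V1.Nonempty ∧ V2.Nonempty ∧
    (∀ a ∈ V1, ∀ b ∈ V1, SameComp G Sᶜ a b) ∧
    (∀ a ∈ V2, ∀ b ∈ V2, SameComp G Sᶜ a b) ∧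
    ∀ a ∈ V1, ∀ b ∈ V2, ¬ SameComp G Sᶜ a b

/-- Significance index of a variable: `x_1 > ⋯ > x_n > y_1 > ⋯ > y_n`. -/
def sigIdx (n : ℕ) : Fin n ⊕ Fin n → ℕ := Sum.elim (fun i => (i : ℕ)) (fun i => n + i)

/-- Lexicographic comparison of exponent vectors. -/
def lexLt (n : ℕ) (a b : (Fin n ⊕ Fin n) →₀ ℕ) : Prop :=
  ∃ v, a v < b v ∧ ∀ w, sigIdx n w < sigIdx n v → a w = b w

/-- `m` is the leading (lex-largest) exponent of `f`. -/
def IsLeadExp (n : ℕ) (f : PolyRing n) (m : (Fin n ⊕ Fin n) →₀ ℕ) : Prop :=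
  m ∈ f.support ∧ ∀ m' ∈ f.support, m' ≠ m → lexLt n m' m

/-- The initial ideal of `I` with respect to the lexicographic order. -/
noncomputable def inIdeal (I : Ideal (PolyRing n)) : Ideal (PolyRing n) :=
  Ideal.span {g | ∃ f ∈ I, ∃ m, IsLeadExp n f m ∧ g = monomial m 1}

/-- A permutation `σ` of `[n]` is `S`-consistent (for `S` an independent set of
the cycle `C_n`). -/
def SConsistent (n : ℕ) [NeZero n] (S : Set (Fin n)) (σ : Equiv.Perm (Fin n)) : Prop :=
  (∀ x : Fin n, x ∉ S → x + 1 ∈ S →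
    ((σ x < σ (x + 2) → x + 3 ∉ S → σ (x + 2) < σ (x + 3)) ∧
     (σ x < σ (x + 2) → x - 1 ∉ S → σ (x - 1) < σ x) ∧
     (σ (x + 2) < σ x → x + 3 ∉ S → σ (x + 3) < σ (x + 2)) ∧
     (σ (x + 2) < σ x → x - 1 ∉ S → σ x < σ (x - 1)))) ∧
  (∀ y : Fin n, y - 1 ∉ S → y ∉ S → y + 1 ∉ S → (σ (y - 1) < σ y ↔ σ y < σ (y + 1)))

section Helpers

variable {n : ℕ} [NeZero n]

private lemma fin_one_val (hn : 2 ≤ n) : ((1 : Fin n) : ℕ) = 1 := by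
  rw [Fin.val_one']; exact Nat.mod_eq_of_lt (by omega)

private lemma fin_val_add_one' (hn : 2 ≤ n) (a : Fin n) (h : a.val + 1 < n) :
    ((a + 1 : Fin n) : ℕ) = a.val + 1 := by
  rw [Fin.add_def]
  simp only [fin_one_val hn]
  exact Nat.mod_eq_of_lt h

private lemma fin_add_one_eq_zero (hn : 2 ≤ n) (a : Fin n) (h : a.val = n - 1) :
    a + 1 = 0 := by
  apply Fin.ext
  rw [Fin.add_def]
  simp only [fin_one_val hn, h]
  have h1 : n - 1 + 1 = n := by omega
  rw [h1, Nat.mod_self, Fin.val_zero]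

private lemma fin_val_sub_one (hn : 2 ≤ n) (a : Fin n) (h : a ≠ 0) :
    ((a - 1 : Fin n) : ℕ) = a.val - 1 := by
  have ha : a.val ≠ 0 := fun hh => h (Fin.ext hh)
  have hlt := a.is_lt
  rw [Fin.sub_def]
  simp only [fin_one_val hn]
  have h1 : n - 1 + a.val = a.val - 1 + n := by omega
  rw [h1, Nat.add_mod_right, Nat.mod_eq_of_lt (by omega)]

private lemma fin_val_neg (a : Fin n) (h : a ≠ 0) : ((-a : Fin n) : ℕ) = n - a.val := by
  have ha : a.val ≠ 0 := fun hh => h (Fin.ext hh)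
  have hlt := a.is_lt
  rw [show -a = 0 - a from (zero_sub a).symm, Fin.sub_def]
  simp only [Fin.val_zero, Nat.add_zero]
  exact Nat.mod_eq_of_lt (by omega)

private lemma e_inj {s a b : Fin n} (h : ((a - s : Fin n) : ℕ) = ((b - s : Fin n) : ℕ)) :
    a = b :=
  sub_left_inj.1 (Fin.ext h)

private lemma keyIff (hn : 3 ≤ n) {r s : Fin n} (hrs : r ≠ s)
    (σ : Equiv.Perm (Fin n))
    (hmax : ∀ x : Fin n, x ≠ r → σ x < σ r)
    (hmin : ∀ x : Fin n, x ≠ s → σ s < σ x)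
    (hinc : ∀ x : Fin n, (x - s).val < (r - s).val → σ x < σ (x + 1))
    (hdec : ∀ x : Fin n, (s - x).val < (s - r).val → σ x < σ (x - 1))
    (x : Fin n) : σ x < σ (x + 1) ↔ x ≠ r ∧ (x - s).val < (r - s).val := by
  have h1 : (1 : Fin n) ≠ 0 := by
    intro h
    have := congrArg Fin.val h
    rw [fin_one_val (by omega), Fin.val_zero] at this
    omega
  have hD0 : (r - s).val ≠ 0 := by
    intro h
    exact hrs (sub_eq_zero.1 (Fin.ext h))
  constructor
  · intro hlt
    by_contra hc
    have hgt : σ (x + 1) < σ x := by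
      by_cases hxr : x = r
      · subst hxr
        exact hmax _ (fun h => h1 (add_eq_left.1 h))
      · have hge : (r - s).val < (x - s).val := by
          rcases lt_trichotomy ((x - s).val) ((r - s).val) with h | h | h
          · exact absurd ⟨hxr, h⟩ hc
          · exact absurd (e_inj h) hxr
          · exact h
        by_cases hxs : x + 1 = s
        · rw [hxs]
          apply hmin
          intro h
          rw [h, sub_self, Fin.val_zero] at hge
          omega
        · have e1 : x + 1 - s ≠ 0 := sub_ne_zero.2 hxs
          have e2 : (x + 1 - s) = (x - s) + 1 := by open Fin.CommRing in ring
          have e3 : (x - s).val + 1 < n := by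
            by_contra hh
            have hv : (x - s).val = n - 1 := by have := (x - s).is_lt; omega
            exact e1 (by rw [e2]; exact fin_add_one_eq_zero (by omega) _ hv)
          have e4 : (x + 1 - s).val = (x - s).val + 1 := by
            rw [e2]; exact fin_val_add_one' (by omega) _ e3
          have harith : (s - (x + 1)).val < (s - r).val := by
            have e5 : (s - (x + 1)).val = n - ((x - s).val + 1) := by
              rw [show s - (x + 1) = -(x + 1 - s) from by open Fin.CommRing in ring, fin_val_neg _ e1, e4]
            have e6 : (s - r).val = n - (r - s).val := by
              rw [show s - r = -(r - s) from by open Fin.CommRing in ring, fin_val_neg _ (fun h => hD0 (by rw [h, Fin.val_zero]))]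
            have := (r - s).is_lt
            omega
          have := hdec (x + 1) harith
          rwa [add_sub_cancel_right] at this
    exact absurd hlt (not_lt.2 hgt.le)
  · exact fun h => hinc x h.2

end Helpers

/-- the explicit permutation with `σ(r) = n`, `σ(s) = 1`, increasing along
both cyclic paths from `s` to `r`, is `S`-consistent. -/
theorem stmt19 {n : ℕ} [NeZero n] (hn : 3 ≤ n) (S : Set (Fin n))
    (hcard : 2 ≤ S.ncard) (hind : ∀ x ∈ S, x + 1 ∉ S)
    (r s : Fin n) (hrs : r ≠ s)
    (hr : r ∉ S ∧ r - 1 ∈ S ∧ r + 1 ∈ S)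
    (hs : s ∉ S ∧ s - 1 ∈ S ∧ s + 1 ∈ S)
    (σ : Equiv.Perm (Fin n))
    (hmax : ∀ x : Fin n, x ≠ r → σ x < σ r)
    (hmin : ∀ x : Fin n, x ≠ s → σ s < σ x)
    (hinc : ∀ x : Fin n, (x - s).val < (r - s).val → σ x < σ (x + 1))
    (hdec : ∀ x : Fin n, (s - x).val < (s - r).val → σ x < σ (x - 1)) :
    SConsistent n S σ := by
  have key := keyIff hn hrs σ hmax hmin hinc hdec
  have h1 : (1 : Fin n) ≠ 0 := by
    intro h
    have := congrArg Fin.val h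
    rw [fin_one_val (by omega), Fin.val_zero] at this
    omega
  -- trichotomy helper
  have tri : ∀ a b : Fin n, a ≠ b → ¬ σ a < σ b → σ b < σ a := by
    intro a b hab h
    exact lt_of_le_of_ne (not_lt.1 h) (fun he => hab (σ.injective he).symm)
  have hD0 : (r - s).val ≠ 0 := fun h => hrs (sub_eq_zero.1 (Fin.ext h))
  have hDn : (r - s).val < n := (r - s).is_lt
  -- D ≥ 2
  have hD2 : 2 ≤ (r - s).val := by
    rcases Nat.lt_or_ge ((r - s).val) 2 with h | h
    · exfalso
      have hd1 : (r - s).val = 1 := by omega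
      have : r = s + 1 := by
        apply e_inj (s := s)
        rw [hd1, add_sub_cancel_left, fin_one_val (by omega)]
      exact hr.1 (this ▸ hs.2.2)
    · exact h
  -- D ≤ n - 2
  have hDn2 : (r - s).val ≤ n - 2 := by
    by_contra h
    have hd1 : (r - s).val = n - 1 := by omega
    have : r = s - 1 := by
      apply e_inj (s := s)
      rw [hd1, show s - 1 - s = -(1 : Fin n) from by open Fin.CommRing in ring, fin_val_neg _ h1,
        fin_one_val (by omega)]
    exact hr.1 (this ▸ hs.2.1)
  constructor
  · -- part 1
    intro x hxS hx1S
    have hx1r : x + 1 ≠ r := fun h => hr.1 (h ▸ hx1S)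
    have hx1s : x + 1 ≠ s := fun h => hs.1 (h ▸ hx1S)
    have hdn : (x - s).val < n := (x - s).is_lt
    -- d ≠ n - 1
    have hdn1 : (x - s).val ≠ n - 1 := by
      intro h
      apply hx1s
      have h0 : (x - s) + 1 = 0 := fin_add_one_eq_zero (by omega) _ h
      have : x + 1 - s = 0 := by rw [show x + 1 - s = (x - s) + 1 from by open Fin.CommRing in ring, h0]
      exact sub_eq_zero.1 this
    have hE1 : (x + 1 - s).val = (x - s).val + 1 := by
      rw [show x + 1 - s = (x - s) + 1 from by open Fin.CommRing in ring]
      exact fin_val_add_one' (by omega) _ (by omega)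
    -- d + 1 ≠ D
    have hd1D : (x - s).val + 1 ≠ (r - s).val := by
      intro h
      exact hx1r (e_inj (by rw [hE1, h]))
    -- x = r ↔ d = D
    have hxr_iff : x = r ↔ (x - s).val = (r - s).val := ⟨fun h => by rw [h], fun h => e_inj h⟩
    have kx : σ x < σ (x + 1) ↔ (x ≠ r ∧ (x - s).val < (r - s).val) := key x
    have k1 : σ (x + 1) < σ (x + 2) ↔ (x - s).val + 1 < (r - s).val := by
      have h := key (x + 1)
      rw [show x + 1 + 1 = x + 2 from by open Fin.CommRing in ring, hE1] at h
      exact ⟨fun hh => (h.1 hh).2, fun hh => h.2 ⟨hx1r, hh⟩⟩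
    have hne01 : x ≠ x + 1 := fun h => h1 (left_eq_add.1 h)
    have hne12 : x + 1 ≠ x + 2 := by
      intro h
      rw [show x + 2 = x + 1 + 1 from by open Fin.CommRing in ring] at h
      exact h1 (left_eq_add.1 h)
    have main : ((x - s).val + 1 < (r - s).val ∧ σ x < σ (x + 2)) ∨
        ((r - s).val ≤ (x - s).val ∧ σ (x + 2) < σ x) := by
      by_cases hc : (x - s).val + 1 < (r - s).val
      · left
        refine ⟨hc, lt_trans ?_ (k1.2 hc)⟩
        exact kx.2 ⟨fun h => by rw [hxr_iff.1 h] at hc; omega, by omega⟩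
      · right
        have hge : (r - s).val ≤ (x - s).val := by omega
        refine ⟨hge, lt_trans (tri _ _ hne12 (fun h => hc (k1.1 h))) ?_⟩
        apply tri _ _ hne01
        intro h
        have := (kx.1 h).2
        omega
    refine ⟨?_, ?_, ?_, ?_⟩
    · -- (i)
      intro h02 h3S
      have hlt : (x - s).val + 1 < (r - s).val := by
        rcases main with ⟨h, _⟩ | ⟨_, h⟩
        · exact h
        · exact absurd h02 (lt_asymm h)
      have hE2 : (x + 2 - s).val = (x - s).val + 2 := by
        rw [show x + 2 - s = x - s + 1 + 1 from by open Fin.CommRing in ring]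
        rw [fin_val_add_one' (by omega) _ (by rw [fin_val_add_one' (by omega) _ (by omega)]; omega),
          fin_val_add_one' (by omega) _ (by omega)]
      have hd2D : (x - s).val + 2 ≠ (r - s).val := by
        intro h
        apply h3S
        have hx2r : x + 2 = r := e_inj (by rw [hE2, h])
        rw [show x + 3 = x + 2 + 1 from by open Fin.CommRing in ring, hx2r]
        exact hr.2.2
      have h := key (x + 2)
      rw [show x + 2 + 1 = x + 3 from by open Fin.CommRing in ring, hE2] at h
      exact h.2 ⟨fun hh => hd2D (by rw [← hE2, hh]), by omega⟩
    · -- (ii)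
      intro h02 hmS
      have hlt : (x - s).val + 1 < (r - s).val := by
        rcases main with ⟨h, _⟩ | ⟨_, h⟩
        · exact h
        · exact absurd h02 (lt_asymm h)
      have hxs : x ≠ s := by
        intro h
        exact hmS (h ▸ hs.2.1)
      have hd0 : (x - s).val ≠ 0 := fun h => hxs (sub_eq_zero.1 (Fin.ext h))
      have hEm : (x - 1 - s).val = (x - s).val - 1 := by
        rw [show x - 1 - s = (x - s) - 1 from by open Fin.CommRing in ring]
        exact fin_val_sub_one (by omega) _ (fun h => hd0 (by rw [h, Fin.val_zero]))
      have h := key (x - 1)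
      rw [show x - 1 + 1 = x from by open Fin.CommRing in ring, hEm] at h
      exact h.2 ⟨fun hh => by
        have := congrArg (fun z : Fin n => (z - s).val) hh
        simp only [hEm] at this
        omega, by omega⟩
    · -- (iii)
      intro h20 h3S
      have hge : (r - s).val ≤ (x - s).val := by
        rcases main with ⟨_, h⟩ | ⟨h, _⟩
        · exact absurd h20 (lt_asymm h)
        · exact h
      by_cases hdd : (x - s).val = n - 2
      · exfalso
        apply h3S
        have hv1 : ((x - s) + 1).val = n - 1 := by
          rw [fin_val_add_one' (by omega) _ (by omega)]; omega
        have hx2s : x + 2 = s := by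
          have h0 : (x - s) + 1 + 1 = 0 := fin_add_one_eq_zero (by omega) _ hv1
          have : x + 2 - s = 0 := by
            rw [show x + 2 - s = (x - s) + 1 + 1 from by open Fin.CommRing in ring, h0]
          exact sub_eq_zero.1 this
        rw [show x + 3 = x + 2 + 1 from by open Fin.CommRing in ring, hx2s]
        exact hs.2.2
      · have hE2 : (x + 2 - s).val = (x - s).val + 2 := by
          rw [show x + 2 - s = x - s + 1 + 1 from by open Fin.CommRing in ring]
          rw [fin_val_add_one' (by omega) _ (by rw [fin_val_add_one' (by omega) _ (by omega)]; omega),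
            fin_val_add_one' (by omega) _ (by omega)]
        have hne23 : x + 2 ≠ x + 3 := by
          intro h
          rw [show x + 3 = x + 2 + 1 from by open Fin.CommRing in ring] at h
          exact h1 (left_eq_add.1 h)
        apply tri _ _ hne23
        intro h
        have hk := key (x + 2)
        rw [show x + 2 + 1 = x + 3 from by open Fin.CommRing in ring, hE2] at hk
        have := (hk.1 h).2
        omega
    · -- (iv)
      intro h20 hmS
      have hge : (r - s).val ≤ (x - s).val := by
        rcases main with ⟨_, h⟩ | ⟨h, _⟩
        · exact absurd h20 (lt_asymm h)
        · exact h
      have hxs : x ≠ s := fun h => hmS (h ▸ hs.2.1)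
      have hxr : x ≠ r := fun h => hmS (h ▸ hr.2.1)
      have hd0 : (x - s).val ≠ 0 := fun h => hxs (sub_eq_zero.1 (Fin.ext h))
      have hdD : (x - s).val ≠ (r - s).val := fun h => hxr (e_inj h)
      have hEm : (x - 1 - s).val = (x - s).val - 1 := by
        rw [show x - 1 - s = (x - s) - 1 from by open Fin.CommRing in ring]
        exact fin_val_sub_one (by omega) _ (fun h => hd0 (by rw [h, Fin.val_zero]))
      have hnem : x - 1 ≠ x := by
        intro h
        have : x - 1 + 1 = x + 1 := by rw [h]
        rw [show x - 1 + 1 = x from by open Fin.CommRing in ring] at this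
        exact h1 (left_eq_add.1 this)
      apply tri _ _ hnem
      intro h
      have hk := key (x - 1)
      rw [show x - 1 + 1 = x from by open Fin.CommRing in ring, hEm] at hk
      have := (hk.1 h).2
      omega
  · -- part 2
    intro y hm hy hp
    have hyr : y ≠ r := fun h => hp (h ▸ hr.2.2)
    have hys : y ≠ s := fun h => hp (h ▸ hs.2.2)
    have hymr : y - 1 ≠ r := by
      intro h
      apply hy
      have : y = r + 1 := by rw [← h]; open Fin.CommRing in ring
      exact this ▸ hr.2.2
    have hd0 : (y - s).val ≠ 0 := fun h => hys (sub_eq_zero.1 (Fin.ext h))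
    have hdD : (y - s).val ≠ (r - s).val := fun h => hyr (e_inj h)
    have hEm : (y - 1 - s).val = (y - s).val - 1 := by
      rw [show y - 1 - s = (y - s) - 1 from by open Fin.CommRing in ring]
      exact fin_val_sub_one (by omega) _ (fun h => hd0 (by rw [h, Fin.val_zero]))
    have hk1 := key (y - 1)
    rw [show y - 1 + 1 = y from by open Fin.CommRing in ring, hEm] at hk1
    have hk2 := key y
    rw [hk1, hk2]
    constructor
    · rintro ⟨_, h⟩
      exact ⟨hyr, by omega⟩
    · rintro ⟨_, h⟩
      exact ⟨hymr, by omega⟩
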